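/- Let q ∈ ℂ with 0 < |q| < 1, let k be a positive integer, and let λ be a partition. Then ∑_{i=1}^∞ (q^{k(λ_i − i + 1)} − q^{k(1 − i)}) = q^k/(1 − q^k) − q^k · ∑_{i=1}^∞ q^{-k(λ'_i − i + 1)}, where the sum on the left has only finitely many nonzero terms (the summand vanishes for i > ℓ(λ)) and the series on the right is summable. -/

import Mathlib

/-- A partition is encoded as `f : ℕ → ℕ` with `f i = λ_{i+1}` (0-based index),
antitone with finite support.  The conjugate partition is
`λ'_{i+1} = Set.ncard {j : ℕ | i + 1 ≤ f j}`.

STATEMENT 2: for `0 < |q| < 1` and `k ≥ 1`,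
`∑_{i=1}^∞ (q^{k(λ_i − i + 1)} − q^{k(1 − i)})
   = q^k/(1 − q^k) − q^k ∑_{i=1}^∞ q^{-k(λ'_i − i + 1)}`,
where the left-hand summand (0-indexed: `q^{k(f i − i)} − q^{-k i}`) is nonzero
for only finitely many `i`, and the right-hand family is summable. -/
theorem closed_topological_vertex_Vk0_eigenvalue
    (q : ℂ) (hq0 : 0 < ‖q‖) (hq1 : ‖q‖ < 1)
    (k : ℕ) (hk : 0 < k)
    (f : ℕ → ℕ) (hf : Antitone f) (hfin : ∃ N, ∀ i, N ≤ i → f i = 0) :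
    {i : ℕ | q ^ ((k : ℤ) * ((f i : ℤ) - i)) - q ^ (-(k : ℤ) * i) ≠ 0}.Finite ∧
    Summable (fun i : ℕ =>
      q ^ (-(k : ℤ) * ((Set.ncard {j : ℕ | i + 1 ≤ f j} : ℤ) - i))) ∧
    (∑' i : ℕ, (q ^ ((k : ℤ) * ((f i : ℤ) - i)) - q ^ (-(k : ℤ) * i))) =
      q ^ k / (1 - q ^ k) -
        q ^ k * ∑' i : ℕ, q ^ (-(k : ℤ) * ((Set.ncard {j : ℕ | i + 1 ≤ f j} : ℤ) - i)) := by
  obtain ⟨N, hN⟩ := hfin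
  have hq : q ≠ 0 := by
    intro h; simp [h] at hq0
  -- the conjugate partition
  have hex : ∀ i : ℕ, ∃ j, f j < i + 1 := fun i => ⟨N, by simp [hN N le_rfl]⟩
  set g : ℕ → ℕ := fun i => Nat.find (hex i) with hgdef
  have hgspec : ∀ i j, i + 1 ≤ f j ↔ j < g i := by
    intro i j
    constructor
    · intro h
      by_contra hc
      push_neg at hc
      have h1 : f (g i) < i + 1 := Nat.find_spec (hex i)
      have h2 : f j ≤ f (g i) := hf hc
      omega
    · intro h
      have := Nat.find_min (hex i) h
      omega
  have hncard : ∀ i, (Set.ncard {j : ℕ | i + 1 ≤ f j} : ℤ) = (g i : ℤ) := by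
    intro i
    have h1 : {j : ℕ | i + 1 ≤ f j} = ↑(Finset.range (g i)) := by
      ext j; simpa using hgspec i j
    rw [h1, Set.ncard_coe_finset, Finset.card_range]
  have hgN : ∀ i, g i ≤ N := by
    intro i
    by_contra hc
    push_neg at hc
    have := (hgspec i N).mpr hc
    have := hN N le_rfl
    omega
  have hg0 : ∀ i, f 0 ≤ i → g i = 0 := by
    intro i hi
    by_contra hc
    have := (hgspec i 0).mpr (Nat.pos_of_ne_zero hc)
    omega
  set M := f 0 with hM
  have hfM : ∀ i, f i ≤ M := fun i => hf (Nat.zero_le i)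
  -- abbreviations
  set L : ℕ → ℂ := fun i => q ^ ((k : ℤ) * ((f i : ℤ) - i)) - q ^ (-(k : ℤ) * i) with hL
  set T : ℕ → ℂ := fun i => q ^ (-(k : ℤ) * ((g i : ℤ) - i)) with hT
  -- L vanishes off range N
  have hLzero : ∀ i ∉ Finset.range N, L i = 0 := by
    intro i hi
    rw [Finset.mem_range, not_lt] at hi
    have h1 : (k : ℤ) * ((f i : ℤ) - i) = -(k : ℤ) * i := by
      rw [hN i hi]; push_cast; ring
    simp [hL, h1]
  -- geometric facts
  have hnorm : ‖q ^ k‖ < 1 := by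
    rw [norm_pow]
    exact pow_lt_one₀ (norm_nonneg q) hq1 hk.ne'
  have hqk1 : q ^ k ≠ 1 := by
    intro h; rw [h] at hnorm; simp at hnorm
  have hqk1' : (1 : ℂ) - q ^ k ≠ 0 := sub_ne_zero.mpr (Ne.symm hqk1)
  -- T is geometric beyond M
  have hTgeo : ∀ i, M ≤ i → T i = (q ^ k) ^ i := by
    intro i hi
    have h1 : -(k : ℤ) * ((g i : ℤ) - i) = ((k * i : ℕ) : ℤ) := by
      rw [hg0 i hi]; push_cast; ring
    rw [hT]
    simp only
    rw [h1, zpow_natCast, pow_mul]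
  have hTsum : Summable T := by
    rw [← summable_nat_add_iff M]
    have h1 : (fun i => T (i + M)) = fun i => (q ^ k) ^ M * (q ^ k) ^ i := by
      funext i
      rw [hTgeo (i + M) (Nat.le_add_left M i), pow_add, mul_comm]
    rw [h1]
    exact (summable_geometric_of_norm_lt_one hnorm).mul_left _
  have hTtsum : ∑' i, T i = (∑ i ∈ Finset.range M, T i) + (q ^ k) ^ M * (1 - q ^ k)⁻¹ := by
    rw [← Summable.sum_add_tsum_nat_add M hTsum]
    congr 1
    have h1 : (fun i => T (i + M)) = fun i => (q ^ k) ^ M * (q ^ k) ^ i := by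
      funext i
      rw [hTgeo (i + M) (Nat.le_add_left M i), pow_add, mul_comm]
    rw [h1, tsum_mul_left, tsum_geometric_of_norm_lt_one hnorm]
  -- the statement's summable family is T
  have hfamily : (fun i : ℕ => q ^ (-(k : ℤ) * ((Set.ncard {j : ℕ | i + 1 ≤ f j} : ℤ) - i)))
      = T := by
    funext i; rw [hT]; simp only [hncard]
  refine ⟨?_, ?_, ?_⟩
  · apply Set.Finite.subset (Finset.range N).finite_toSet
    intro i hi
    simp only [Set.mem_setOf_eq] at hi
    by_contra hc
    exact hi (hLzero i hc)
  · rw [hfamily]; exact hTsum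
  -- main identity
  have hLtsum : (∑' i, L i) = ∑ i ∈ Finset.range N, L i := tsum_eq_sum hLzero
  -- the cell summand
  set h : ℕ → ℕ → ℂ := fun i c =>
    q ^ ((k : ℤ) * ((c : ℤ) + 1 - i)) - q ^ ((k : ℤ) * ((c : ℤ) - i)) with hh
  -- telescoping rows
  have hrow : ∀ i : ℕ, L i = ∑ c ∈ Finset.range (f i), h i c := by
    intro i
    have h1 := Finset.sum_range_sub (fun c : ℕ => q ^ ((k : ℤ) * ((c : ℤ) - i))) (f i)
    have h2 : ∑ c ∈ Finset.range (f i),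
        (q ^ ((k : ℤ) * (((c + 1 : ℕ) : ℤ) - i)) - q ^ ((k : ℤ) * ((c : ℤ) - i)))
        = ∑ c ∈ Finset.range (f i), h i c := by
      refine Finset.sum_congr rfl fun c _ => ?_
      rw [hh]; simp only
      congr 2 <;> (push_cast; ring)
    rw [hL]; simp only
    rw [← h2, h1]
    congr 2 <;> (push_cast; ring)
  -- telescoping columns
  have hcol : ∀ i : ℕ,
      q ^ ((k : ℤ) * ((i : ℤ) + 1)) - q ^ ((k : ℤ) * ((i : ℤ) + 1 - (g i : ℤ)))
        = ∑ r ∈ Finset.range (g i), h r i := by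
    intro i
    have h1 := Finset.sum_range_sub' (fun r : ℕ => q ^ ((k : ℤ) * ((i : ℤ) + 1 - r))) (g i)
    have h2 : ∑ r ∈ Finset.range (g i),
        (q ^ ((k : ℤ) * ((i : ℤ) + 1 - r)) - q ^ ((k : ℤ) * ((i : ℤ) + 1 - ((r + 1 : ℕ) : ℤ))))
        = ∑ r ∈ Finset.range (g i), h r i := by
      refine Finset.sum_congr rfl fun r _ => ?_
      rw [hh]; simp only
      congr 2 <;> (push_cast; ring)
    rw [← h2, h1]
    congr 2 <;> (push_cast; ring)
  -- filters
  have hfilt1 : ∀ i, Finset.filter (fun c => c < f i) (Finset.range M) = Finset.range (f i) := by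
    intro i
    ext c
    simp only [Finset.mem_filter, Finset.mem_range]
    have := hfM i
    omega
  have hfilt2 : ∀ c, Finset.filter (fun i => c < f i) (Finset.range N) = Finset.range (g c) := by
    intro c
    ext i
    simp only [Finset.mem_filter, Finset.mem_range]
    have h1 := hgspec c i
    have h2 := hgN c
    omega
  -- the double sum identity
  have hkey : ∑ i ∈ Finset.range N, L i
      = ∑ i ∈ Finset.range M,
          (q ^ ((k : ℤ) * ((i : ℤ) + 1)) - q ^ ((k : ℤ) * ((i : ℤ) + 1 - (g i : ℤ)))) := by
    calc ∑ i ∈ Finset.range N, L i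
        = ∑ i ∈ Finset.range N, ∑ c ∈ Finset.range (f i), h i c :=
          Finset.sum_congr rfl fun i _ => hrow i
      _ = ∑ i ∈ Finset.range N, ∑ c ∈ Finset.range M, if c < f i then h i c else 0 := by
          refine Finset.sum_congr rfl fun i _ => ?_
          rw [Finset.sum_ite, Finset.sum_const_zero, add_zero, hfilt1 i]
      _ = ∑ c ∈ Finset.range M, ∑ i ∈ Finset.range N, if c < f i then h i c else 0 :=
          Finset.sum_comm
      _ = ∑ c ∈ Finset.range M, ∑ i ∈ Finset.range (g c), h i c := by
          refine Finset.sum_congr rfl fun c _ => ?_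
          rw [Finset.sum_ite, Finset.sum_const_zero, add_zero, hfilt2 c]
      _ = _ := Finset.sum_congr rfl fun c _ => (hcol c).symm
  -- rewrite terms of the finite sum
  have hterm1 : ∀ i : ℕ, q ^ ((k : ℤ) * ((i : ℤ) + 1)) = q ^ k * (q ^ k) ^ i := by
    intro i
    have h1 : (k : ℤ) * ((i : ℤ) + 1) = ((k + k * i : ℕ) : ℤ) := by push_cast; ring
    rw [h1, zpow_natCast, pow_add, pow_mul]
  have hterm2 : ∀ i : ℕ, q ^ ((k : ℤ) * ((i : ℤ) + 1 - (g i : ℤ))) = q ^ k * T i := by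
    intro i
    have h1 : (k : ℤ) * ((i : ℤ) + 1 - (g i : ℤ)) = (k : ℤ) + (-(k : ℤ) * ((g i : ℤ) - i)) := by
      ring
    rw [h1, zpow_add₀ hq, zpow_natCast]
  rw [hfamily, hLtsum, hkey, hTtsum]
  have hgeom : ∑ i ∈ Finset.range M, (q ^ k) ^ i = ((q ^ k) ^ M - 1) / (q ^ k - 1) :=
    geom_sum_eq hqk1 M
  calc ∑ i ∈ Finset.range M,
        (q ^ ((k : ℤ) * ((i : ℤ) + 1)) - q ^ ((k : ℤ) * ((i : ℤ) + 1 - (g i : ℤ))))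
      = ∑ i ∈ Finset.range M, (q ^ k * (q ^ k) ^ i - q ^ k * T i) := by
        refine Finset.sum_congr rfl fun i _ => ?_
        rw [hterm1 i, hterm2 i]
    _ = q ^ k * (((q ^ k) ^ M - 1) / (q ^ k - 1)) - q ^ k * ∑ i ∈ Finset.range M, T i := by
        rw [Finset.sum_sub_distrib, ← Finset.mul_sum, ← Finset.mul_sum, hgeom]
    _ = q ^ k / (1 - q ^ k) -
          q ^ k * ((∑ i ∈ Finset.range M, T i) + (q ^ k) ^ M * (1 - q ^ k)⁻¹) := by
        have h1 : q ^ k - 1 ≠ 0 := sub_ne_zero.mpr hqk1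
        field_simp
        ring
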